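/- Let A be an Iwanaga-Gorenstein ring and P the category of finitely generated projective A-modules. Then K^{+,∅}(P) = 0: every left bounded acyclic complex of finitely generated projective A-modules is contractible. -/

import Mathlib

open CategoryTheory Limits Pretriangulated Opposite

universe w v u

namespace St12


noncomputable section Aux

variable {A : Type u} [Ring A]

/-- A projective resolution from a positively-exact complex of projectives with an
augmentation. -/
noncomputable def resolutionOf (Q : ChainComplex (ModuleCat.{u} A) ℕ)
    (hQP : ∀ t, Projective (Q.X t))
    (hQex : ∀ t : ℕ, Q.ExactAt (t + 1))
    (M : ModuleCat.{u} A) (π0 : Q.X 0 ⟶ M)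
    (hsurj : Function.Surjective π0)
    (hker : LinearMap.ker π0.hom = LinearMap.range (Q.d 1 0).hom)
    (hw : Q.d 1 0 ≫ π0 = 0) :
    ProjectiveResolution M where
  complex := Q
  projective := hQP
  π := (ChainComplex.toSingle₀Equiv _ _).symm ⟨π0, hw⟩
  quasiIso := ⟨fun t => by
    cases t with
    | zero =>
      rw [ChainComplex.quasiIsoAt₀_iff,
        ShortComplex.quasiIso_iff_of_zeros' _ (Q.shape 0 0 (by simp)) rfl rfl]
      constructor
      · rw [ShortComplex.moduleCat_exact_iff]
        intro (x : Q.X 0) hx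
        have hx' : x ∈ LinearMap.ker π0.hom := by
          have : ((ChainComplex.toSingle₀Equiv Q M).symm ⟨π0, hw⟩).f 0 x = 0 := hx
          rwa [ChainComplex.toSingle₀Equiv_symm_apply_f_zero] at this
        rw [hker] at hx'
        exact hx'
      · have : (((ChainComplex.toSingle₀Equiv Q M).symm ⟨π0, hw⟩).f 0) = π0 :=
          ChainComplex.toSingle₀Equiv_symm_apply_f_zero _ _
        rw [ModuleCat.epi_iff_surjective]
        show Function.Surjective (((ChainComplex.toSingle₀Equiv Q M).symm ⟨π0, hw⟩).f 0)
        rw [this]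
        exact hsurj
    | succ t =>
      rw [quasiIsoAt_iff_exactAt' _ _ (ChainComplex.exactAt_succ_single_obj _ _)]
      exact hQex t⟩

variable (X : CochainComplex (ModuleCat.{u} A) ℤ)

/-- Elementwise exactness of the cochain complex `X`. -/
lemma hex (hac : ∀ i, X.ExactAt i) (a b c : ℤ) (hab : a + 1 = b) (hbc : b + 1 = c)
    (x : X.X b) (hx : X.d b c x = 0) : ∃ y : X.X a, X.d a b y = x := by
  have h := hac b
  rw [HomologicalComplex.exactAt_iff' X a b c
    (by rw [CochainComplex.prev]; omega) (by rw [CochainComplex.next]; omega)] at h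
  rw [ShortComplex.moduleCat_exact_iff] at h
  exact h x hx

lemma dd_apply (a b c : ℤ) (x : X.X a) : X.d b c (X.d a b x) = 0 := by
  have : (X.d a b ≫ X.d b c) x = X.d b c (X.d a b x) := rfl
  rw [← this, X.d_comp_d a b c]
  rfl

variable (n : ℕ)

lemma bridge
    (hleft : ∀ (M : ModuleCat.{u} A) (i : ℕ), n < i →
      IsZero (((_root_.Ext ℤ (ModuleCat.{u} A) i).obj (op M)).obj (ModuleCat.of A A)))
    (hproj : ∀ i, Module.Projective A (X.X i))
    (hac : ∀ i, X.ExactAt i)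
    (ι : ℕ → ℤ) (hι : ∀ t, ι (t + 1) + 1 = ι t)
    (g : X.X (ι (n+1)) ⟶ ModuleCat.of A A)
    (hg : X.d (ι (n+2)) (ι (n+1)) ≫ g = 0) :
    ∃ h : X.X (ι n) ⟶ ModuleCat.of A A, X.d (ι (n+1)) (ι n) ≫ h = g := by
  classical
  let Q : ChainComplex (ModuleCat.{u} A) ℕ :=
    ChainComplex.of (fun t => X.X (ι t)) (fun t => X.d (ι (t+1)) (ι t))
      (fun t => X.d_comp_d _ _ _)
  have hQd : ∀ t : ℕ, Q.d (t+1) t = X.d (ι (t+1)) (ι t) := fun t =>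
    ChainComplex.of_d (fun t => X.X (ι t)) (fun t => X.d (ι (t+1)) (ι t)) t
  have hQP : ∀ t, Projective (Q.X t) := fun t =>
    (IsProjective.iff_projective _).mp (hproj (ι t))
  have hQex : ∀ t : ℕ, Q.ExactAt (t + 1) := by
    intro t
    rw [HomologicalComplex.exactAt_iff' Q (t+2) (t+1) t
      (by rw [ChainComplex.prev]; omega) (ChainComplex.next_nat_succ t)]
    rw [ShortComplex.moduleCat_exact_iff]
    intro (x : X.X (ι (t+1))) hx
    have hx' : X.d (ι (t+1)) (ι t) x = 0 := by
      have e : (Q.sc' (t+2) (t+1) t).g = Q.d (t+1) t := rfl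
      rw [e, hQd t] at hx
      exact hx
    obtain ⟨y, hy⟩ := hex X hac (ι (t+2)) (ι (t+1)) (ι t) (hι (t+1)) (hι t) x hx'
    refine ⟨y, ?_⟩
    show Q.d (t+2) (t+1) y = x
    rw [hQd (t+1)]
    exact hy
  let M : ModuleCat.{u} A := ModuleCat.of A (LinearMap.ker (X.d (ι 0 + 1) (ι 0 + 1 + 1)).hom)
  let π0 : Q.X 0 ⟶ M :=
    ModuleCat.ofHom (LinearMap.codRestrict _ (X.d (ι 0) (ι 0 + 1)).hom
      (fun x => by simpa using dd_apply X (ι 0) (ι 0 + 1) (ι 0 + 1 + 1) x))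
  have hsurj : Function.Surjective π0 := by
    rintro ⟨x, hx⟩
    obtain ⟨y, hy⟩ := hex X hac (ι 0) (ι 0 + 1) (ι 0 + 1 + 1) rfl rfl x hx
    exact ⟨y, Subtype.ext hy⟩
  have hker : LinearMap.ker π0.hom = LinearMap.range (Q.d 1 0).hom := by
    ext x
    constructor
    · intro hx
      have hx' : X.d (ι 0) (ι 0 + 1) x = 0 := by
        have := congrArg (Subtype.val) (show π0 x = 0 from hx)
        exact this
      obtain ⟨y, hy⟩ := hex X hac (ι 1) (ι 0) (ι 0 + 1) (hι 0) rfl x hx'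
      refine ⟨y, ?_⟩
      show Q.d (0+1) 0 y = x
      rw [hQd 0]
      exact hy
    · rintro ⟨y, rfl⟩
      show π0 (Q.d 1 0 y) = 0
      apply Subtype.ext
      show X.d (ι 0) (ι 0 + 1) (Q.d 1 0 y) = 0
      rw [show Q.d 1 0 y = X.d (ι 1) (ι 0) y from ConcreteCategory.congr_hom (hQd 0) y]
      exact dd_apply X (ι 1) (ι 0) (ι 0 + 1) y
  have hw : Q.d 1 0 ≫ π0 = 0 := by
    apply ModuleCat.hom_ext; apply LinearMap.ext; intro x
    show π0 (Q.d 1 0 x) = 0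
    have : Q.d 1 0 x ∈ LinearMap.ker π0.hom := by rw [hker]; exact ⟨x, rfl⟩
    exact this
  let P : ProjectiveResolution M := resolutionOf Q hQP hQex M π0 hsurj hker hw
  have hE := hleft M (n+1) (by omega)
  have hz : IsZero ((Q.linearYonedaObj ℤ (ModuleCat.of A A)).homology (n+1)) :=
    hE.of_iso (P.isoExt (n+1) (ModuleCat.of A A)).symm
  have hexY : (Q.linearYonedaObj ℤ (ModuleCat.of A A)).ExactAt (n+1) := by
    rw [HomologicalComplex.exactAt_iff_isZero_homology]
    exact hz
  rw [HomologicalComplex.exactAt_iff' _ n (n+1) (n+2)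
    (CochainComplex.prev_nat_succ n) (by rw [CochainComplex.next]; omega)] at hexY
  rw [ShortComplex.moduleCat_exact_iff] at hexY
  obtain ⟨h, hh⟩ := hexY (g : (Q.linearYonedaObj ℤ (ModuleCat.of A A)).X (n+1)) (by
    show (Q.linearYonedaObj ℤ (ModuleCat.of A A)).d (n+1) (n+2) g = 0
    rw [ChainComplex.linearYonedaObj_d]
    show Q.d (n+2) (n+1) ≫ g = 0
    rw [hQd (n+1)]
    exact hg)
  refine ⟨h, ?_⟩
  have hh' : (Q.linearYonedaObj ℤ (ModuleCat.of A A)).d n (n+1) h = g := hh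
  rw [ChainComplex.linearYonedaObj_d] at hh'
  have : Q.d (n+1) n ≫ h = g := hh'
  rw [hQd n] at this
  exact this

end Aux

noncomputable section Aux2

variable {A : Type u} [Ring A] (X : CochainComplex (ModuleCat.{u} A) ℤ)

lemma dd_apply' (a b c : ℤ) (x : X.X a) : X.d b c (X.d a b x) = 0 := by
  have : (X.d a b ≫ X.d b c) x = X.d b c (X.d a b x) := rfl
  rw [← this, X.d_comp_d a b c]
  rfl

/-- The kernel of the differential leaving spot `i`. -/
def KK (i : ℤ) : Submodule A (X.X i) := LinearMap.ker (X.d i (i+1)).hom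

/-- The corestriction of the differential to the next kernel. -/
def dres (j c : ℤ) : X.X j →ₗ[A] (KK X c) :=
  LinearMap.codRestrict _ (X.d j c).hom (fun x => by
    simpa [KK, LinearMap.mem_ker] using dd_apply' X j c (c+1) x)

@[simp] lemma dres_apply_coe (j c : ℤ) (x : X.X j) :
    ((dres X j c x : KK X c) : X.X c) = X.d j c x := rfl

lemma subsingleton_of_isZero {M : ModuleCat.{u} A} (h : IsZero M) : Subsingleton M := by
  have hid : (𝟙 M : M ⟶ M) = 0 := h.eq_of_src _ _
  refine ⟨fun a b => ?_⟩
  have ha : a = (𝟙 M : M ⟶ M) a := rfl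
  have hb : b = (𝟙 M : M ⟶ M) b := rfl
  rw [ha, hb, hid]
  rfl

variable (n : ℕ)


lemma extension_property
    (hleft : ∀ (M : ModuleCat.{u} A) (i : ℕ), n < i →
      IsZero (((_root_.Ext ℤ (ModuleCat.{u} A) i).obj (op M)).obj (ModuleCat.of A A)))
    (hproj : ∀ i, Module.Projective A (X.X i))
    (hac : ∀ i, X.ExactAt i)
    (c : ℤ) (f : (KK X c) →ₗ[A] A) :
    ∃ h : X.X c →ₗ[A] A, ∀ (x : X.X c) (hx : x ∈ KK X c), h x = f ⟨x, hx⟩ := by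
  classical
  set ι : ℕ → ℤ := fun t => c + n - t with hιdef
  have hι : ∀ t : ℕ, ι (t + 1) + 1 = ι t := fun t => by
    simp only [hιdef]; push_cast; ring
  have e1 : ι (n+1) = c - 1 := by simp only [hιdef]; push_cast; ring
  have e0 : ι n = c := by simp only [hιdef]; push_cast; ring
  let g : X.X (c-1) ⟶ ModuleCat.of A A := ModuleCat.ofHom (f ∘ₗ dres X (c-1) c)
  let ψ := X.XIsoOfEq e1
  have hg' : X.d (ι (n+2)) (ι (n+1)) ≫ (ψ.hom ≫ g) = 0 := by
    rw [← Category.assoc, X.d_comp_XIsoOfEq_hom e1]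
    apply ModuleCat.hom_ext; apply LinearMap.ext; intro x
    show f (dres X (c-1) c (X.d (ι (n+2)) (c-1) x)) = 0
    have hz : dres X (c-1) c (X.d (ι (n+2)) (c-1) x) = 0 :=
      Subtype.ext (dd_apply' X (ι (n+2)) (c-1) c x)
    rw [hz, map_zero]
  obtain ⟨h', hh'⟩ := bridge X n hleft hproj hac ι hι (ψ.hom ≫ g) hg'
  refine ⟨((X.XIsoOfEq e0).inv ≫ h').hom, fun x hx => ?_⟩
  obtain ⟨y, hy⟩ := hex X hac (c-1) c (c+1) (by ring) rfl x hx
  subst hy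
  set z := ψ.inv y with hz
  have hyz : y = ψ.hom z := by
    rw [hz]
    exact (ConcreteCategory.congr_hom ψ.inv_hom_id y).symm
  have key1 : (X.XIsoOfEq e0).inv (X.d (c-1) c y) = X.d (c-1) (ι n) y :=
    ConcreteCategory.congr_hom (X.d_comp_XIsoOfEq_inv e0 (c-1)) y
  have key2 : X.d (c-1) (ι n) y = X.d (ι (n+1)) (ι n) z := by
    conv_lhs => rw [hyz]
    exact ConcreteCategory.congr_hom (X.XIsoOfEq_hom_comp_d e1 (ι n)) z
  show h' ((X.XIsoOfEq e0).inv (X.d (c-1) c y)) = f ⟨X.d (c-1) c y, hx⟩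
  rw [key1, key2]
  have key3 : h' (X.d (ι (n+1)) (ι n) z) = g (ψ.hom z) := ConcreteCategory.congr_hom hh' z
  rw [key3, ← hyz]
  show f (dres X (c-1) c y) = f ⟨X.d (c-1) c y, hx⟩
  rfl

lemma extension_property_to
    (hleft : ∀ (M : ModuleCat.{u} A) (i : ℕ), n < i →
      IsZero (((_root_.Ext ℤ (ModuleCat.{u} A) i).obj (op M)).obj (ModuleCat.of A A)))
    (hproj : ∀ i, Module.Projective A (X.X i))
    (hac : ∀ i, X.ExactAt i)
    (c : ℤ) (P0 : Type u) [AddCommGroup P0] [Module A P0]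
    [Module.Finite A P0] [Module.Projective A P0]
    (f : (KK X c) →ₗ[A] P0) :
    ∃ h : X.X c →ₗ[A] P0, ∀ (x : X.X c) (hx : x ∈ KK X c), h x = f ⟨x, hx⟩ := by
  obtain ⟨k, πk, hπk⟩ := Module.Finite.exists_fin' A P0
  obtain ⟨sec, hsec⟩ := Module.projective_lifting_property πk LinearMap.id hπk
  choose h hh using fun t : Fin k =>
    extension_property X n hleft hproj hac c ((LinearMap.proj t) ∘ₗ (sec ∘ₗ f))
  refine ⟨πk ∘ₗ LinearMap.pi h, fun x hx => ?_⟩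
  have hpi : (LinearMap.pi h) x = sec (f ⟨x, hx⟩) := by
    funext t
    rw [LinearMap.pi_apply, hh t x hx]
    rfl
  show πk ((LinearMap.pi h) x) = f ⟨x, hx⟩
  rw [hpi]
  exact DFunLike.congr_fun hsec (f ⟨x, hx⟩)

lemma dres_surj (hac : ∀ i, X.ExactAt i) (j c : ℤ) (hjc : j + 1 = c) :
    Function.Surjective (dres X j c) := by
  rintro ⟨x, hx⟩
  obtain ⟨y, hy⟩ := hex X hac j c (c+1) hjc rfl x hx
  exact ⟨y, Subtype.ext hy⟩

lemma tau_exists (hac : ∀ i, X.ExactAt i) (j c : ℤ) (hjc : j + 1 = c)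
    (r : X.X j →ₗ[A] (KK X j)) (hr : ∀ k : (KK X j), r ↑k = k) :
    ∃ τ : (KK X c) →ₗ[A] X.X j,
      (∀ (x : X.X j), τ (dres X j c x) = x - ((r x : KK X j) : X.X j)) ∧
      (∀ k : (KK X c), X.d j c (τ k) = ↑k) := by
  subst hjc
  let p : X.X j →ₗ[A] X.X j := LinearMap.id - (KK X j).subtype ∘ₗ r
  have hp : ∀ x : X.X j, p x = x - ((r x : KK X j) : X.X j) := fun x => rfl
  have hsurj := dres_surj X hac j (j+1) rfl
  have hkerm : ∀ x ∈ LinearMap.ker (dres X j (j+1)), p x = 0 := by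
    intro x hx
    have hx' : x ∈ KK X j := by
      have : X.d j (j+1) x = 0 := congrArg Subtype.val (show dres X j (j+1) x = 0 from hx)
      exact this
    have hrx : r x = ⟨x, hx'⟩ := hr ⟨x, hx'⟩
    rw [hp, hrx]
    show x - x = 0
    simp
  let e := LinearMap.quotKerEquivOfSurjective (dres X j (j+1)) hsurj
  let τ : (KK X (j+1)) →ₗ[A] X.X j :=
    ((LinearMap.ker (dres X j (j+1))).liftQ p hkerm) ∘ₗ (e.symm : (KK X (j+1)) →ₗ[A] _)
  have key : ∀ x : X.X j, τ (dres X j (j+1) x) = p x := by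
    intro x
    have h1 : e.symm (dres X j (j+1) x) = Submodule.Quotient.mk x := by
      apply e.injective
      rw [LinearEquiv.apply_symm_apply]
      show dres X j (j+1) x = e (Submodule.Quotient.mk x)
      simp [e, LinearMap.quotKerEquivOfSurjective]
    show ((LinearMap.ker (dres X j (j+1))).liftQ p hkerm) (e.symm (dres X j (j+1) x)) = p x
    rw [h1]
    exact Submodule.liftQ_apply _ p x
  refine ⟨τ, fun x => by rw [key, hp], fun k => ?_⟩
  obtain ⟨x, hx⟩ := hsurj k
  have h2 : X.d j (j+1) ((r x : KK X j) : X.X j) = 0 := (r x).2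
  calc X.d j (j+1) (τ k) = X.d j (j+1) (τ (dres X j (j+1) x)) := by rw [hx]
    _ = X.d j (j+1) (p x) := by rw [key]
    _ = X.d j (j+1) x - X.d j (j+1) ((r x : KK X j) : X.X j) := by rw [hp, map_sub]
    _ = X.d j (j+1) x := by rw [h2, sub_zero]
    _ = ↑k := congrArg Subtype.val hx

lemma step
    (hleft : ∀ (M : ModuleCat.{u} A) (i : ℕ), n < i →
      IsZero (((_root_.Ext ℤ (ModuleCat.{u} A) i).obj (op M)).obj (ModuleCat.of A A)))
    (hproj : ∀ i, Module.Projective A (X.X i))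
    (hac : ∀ i, X.ExactAt i)
    (hfin : ∀ i, Module.Finite A (X.X i))
    (i : ℤ)
    (hFin : Module.Finite A (KK X i)) (hProj : Module.Projective A (KK X i))
    (hret : ∃ r : X.X i →ₗ[A] (KK X i), ∀ k : (KK X i), r ↑k = k) :
    Module.Finite A (KK X (i+1)) ∧ Module.Projective A (KK X (i+1)) ∧
      ∃ r' : X.X (i+1) →ₗ[A] (KK X (i+1)), ∀ k : (KK X (i+1)), r' ↑k = k := by
  obtain ⟨r, hr⟩ := hret
  obtain ⟨τ, hτ1, hτ2⟩ := tau_exists X hac i (i+1) rfl r hr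
  have hsurj := dres_surj X hac i (i+1) rfl
  haveI : Module.Finite A (X.X i) := hfin i
  have hF : Module.Finite A (KK X (i+1)) := Module.Finite.of_surjective (dres X i (i+1)) hsurj
  have hdτ : (dres X i (i+1)) ∘ₗ τ = LinearMap.id := by
    apply LinearMap.ext; intro k
    apply Subtype.ext
    show X.d i (i+1) (τ k) = ↑k
    exact hτ2 k
  haveI : Module.Projective A (X.X i) := hproj i
  have hP : Module.Projective A (KK X (i+1)) :=
    Module.Projective.of_split τ (dres X i (i+1)) hdτ
  haveI := hF; haveI := hP
  obtain ⟨h, hh⟩ := extension_property_to X n hleft hproj hac (i+1) (KK X (i+1)) LinearMap.id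
  refine ⟨hF, hP, ⟨h, fun k => ?_⟩⟩
  have := hh ↑k k.2
  rw [this]
  rfl

lemma S_of_subsingleton (i : ℤ) (hs : Subsingleton (KK X i)) :
    Module.Finite A (KK X i) ∧ Module.Projective A (KK X i) ∧
      ∃ r : X.X i →ₗ[A] (KK X i), ∀ k : (KK X i), r ↑k = k := by
  refine ⟨⟨?_⟩, ?_, 0, fun k => Subsingleton.elim _ _⟩
  · have : (⊤ : Submodule A (KK X i)) = Submodule.span A {0} := by
      apply le_antisymm
      · intro x _
        rw [Subsingleton.elim x 0]
        exact Submodule.zero_mem _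
      · exact le_top
    rw [this]
    exact Submodule.fg_span (Set.finite_singleton 0)
  · exact Module.Projective.of_basis (Module.Basis.empty _ : Module.Basis PEmpty.{1} A (KK X i))

end Aux2

theorem stmt12 (A : Type u) [Ring A] [IsNoetherianRing A] [IsNoetherianRing Aᵐᵒᵖ]
    (n : ℕ)
    (hleft : ∀ (M : ModuleCat.{u} A) (i : ℕ), n < i →
      IsZero (((_root_.Ext ℤ (ModuleCat.{u} A) i).obj (op M)).obj (ModuleCat.of A A)))
    (hright : ∀ (M : ModuleCat.{u} Aᵐᵒᵖ) (i : ℕ), n < i →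
      IsZero (((_root_.Ext ℤ (ModuleCat.{u} Aᵐᵒᵖ) i).obj (op M)).obj (ModuleCat.of Aᵐᵒᵖ Aᵐᵒᵖ)))
    (X : CochainComplex (ModuleCat.{u} A) ℤ)
    (hproj : ∀ i, Module.Projective A (X.X i))
    (hfin : ∀ i, Module.Finite A (X.X i))
    (hlb : ∃ N : ℤ, ∀ i ≤ N, IsZero (X.X i))
    (hac : ∀ i, X.ExactAt i) :
    Nonempty (Homotopy (𝟙 X) 0) := by
  classical
  obtain ⟨N, hN⟩ := hlb
  -- All kernels below N+1 are trivial.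
  have hsub : ∀ i ≤ N + 1, Subsingleton (KK X i) := by
    intro i hi
    have hXsub : Subsingleton (X.X (i-1)) := subsingleton_of_isZero (hN (i-1) (by omega))
    refine ⟨fun a b => ?_⟩
    have key : ∀ k : KK X i, k = 0 := by
      rintro ⟨x, hx⟩
      obtain ⟨y, hy⟩ := hex X hac (i-1) i (i+1) (by ring) rfl x hx
      apply Subtype.ext
      show x = 0
      rw [← hy, Subsingleton.elim y 0, map_zero]
    rw [key a, key b]
  -- the inductive property
  have S : ∀ i : ℤ, Module.Finite A (KK X i) ∧ Module.Projective A (KK X i) ∧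
      ∃ r : X.X i →ₗ[A] (KK X i), ∀ k : (KK X i), r ↑k = k := by
    intro i
    rcases le_or_gt i (N+1) with h | h
    · exact S_of_subsingleton X i (hsub i h)
    · exact Int.le_induction
        (motive := fun j _ => Module.Finite A (KK X j) ∧ Module.Projective A (KK X j) ∧
          ∃ r : X.X j →ₗ[A] (KK X j), ∀ k : (KK X j), r ↑k = k)
        (S_of_subsingleton X (N+1) (hsub (N+1) le_rfl))
        (fun j _ ih => step X n hleft hproj hac hfin j ih.1 ih.2.1 ih.2.2) i (by omega)
  have hr' : ∀ i : ℤ, ∃ r : X.X i →ₗ[A] (KK X i), ∀ k : (KK X i), r ↑k = k :=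
    fun i => (S i).2.2
  choose r hr using hr'
  have hτ' : ∀ (j c : ℤ), j + 1 = c → ∃ τ : (KK X c) →ₗ[A] X.X j,
      (∀ (x : X.X j), τ (dres X j c x) = x - ((r j x : KK X j) : X.X j)) ∧
      (∀ k : (KK X c), X.d j c (τ k) = ↑k) :=
    fun j c hjc => tau_exists X hac j c hjc (r j) (hr j)
  choose τ hτ1 hτ2 using hτ'
  refine ⟨{
    hom := fun i j => if h : j + 1 = i then
      ModuleCat.ofHom ((τ j i h) ∘ₗ (r i)) else 0
    zero := fun i j hn => dif_neg hn
    comm := fun i => ?_ }⟩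
  rw [dNext_eq _ (show (ComplexShape.up ℤ).Rel i (i+1) from rfl),
    prevD_eq _ (show (ComplexShape.up ℤ).Rel (i-1) i from by change i - 1 + 1 = i; ring)]
  rw [dif_pos rfl, dif_pos (show (i-1) + 1 = i by ring)]
  apply ModuleCat.hom_ext; apply LinearMap.ext; intro x
  have hmem : X.d i (i+1) x ∈ KK X (i+1) := by
    simpa [KK, LinearMap.mem_ker] using dd_apply' X i (i+1) (i+1+1) x
  have h1 : r (i+1) (X.d i (i+1) x) = dres X i (i+1) x := by
    have := hr (i+1) ⟨X.d i (i+1) x, hmem⟩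
    rw [this]
    rfl
  have hterm1 : (τ i (i+1) rfl ∘ₗ r (i+1)) (X.d i (i+1) x)
      = x - ((r i x : KK X i) : X.X i) := by
    show τ i (i+1) rfl (r (i+1) (X.d i (i+1) x)) = _
    rw [h1]
    exact hτ1 i (i+1) rfl x
  have hterm2 : X.d (i-1) i ((τ (i-1) i (show (i-1)+1 = i by ring) ∘ₗ r i) x)
      = ((r i x : KK X i) : X.X i) := hτ2 (i-1) i (show (i-1)+1 = i by ring) (r i x)
  show (𝟙 X : X ⟶ X).f i x = _
  simp only [HomologicalComplex.id_f]
  show x = _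
  have : ∀ (u v : X.X i ⟶ X.X i) (y : X.X i), (u + v + (0 : X ⟶ X).f i) y = u y + v y := by
    intro u v y
    show (u + v + 0) y = u y + v y
    rw [add_zero]
    rfl
  rw [this]
  show x = (τ i (i+1) rfl ∘ₗ r (i+1)) (X.d i (i+1) x)
      + X.d (i-1) i ((τ (i-1) i _ ∘ₗ r i) x)
  rw [hterm1, hterm2]
  abel

end St12
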